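/- arXiv:1606.04611 — 4 statements merged into one kernel-verified Lean document; each statement's English description precedes it below -/
import Mathlib

section
/- Let k be a number field with ring of integers A, and let p be a prime number that is unramified in k. Then the cyclotomic polynomial Φ_p(X) = X^{p-1} + ⋯ + X + 1 is irreducible in k[X]. -/
open NumberField Polynomial

/-- if the prime `p` is unramified in the number field `k` (i.e. `p·𝓞 k` is a
product of distinct prime ideals, equivalently the ideal `(p)` is squarefree), then
`Φ_p(X) = X^(p-1) + ⋯ + X + 1` is irreducible in `k[X]`. -/
theorem stmt_0 (k : Type) [Field k] [NumberField k] (p : ℕ) (hp : p.Prime)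
    (hur : Squarefree (Ideal.span {(p : 𝓞 k)} : Ideal (𝓞 k))) :
    Irreducible (∑ i ∈ Finset.range p, (Polynomial.X : k[X]) ^ i) := by
  haveI : Fact p.Prime := ⟨hp⟩
  -- `p` is not a unit in `𝓞 k`
  have hnu : ¬ IsUnit (p : 𝓞 k) := by
    rw [NumberField.isUnit_iff_norm, RingOfIntegers.coe_norm]
    have hcast : (((p : 𝓞 k) : k)) = algebraMap ℚ k (p : ℚ) := by push_cast; rfl
    rw [hcast, Algebra.norm_algebraMap]
    have h1 : (1:ℚ) < (p:ℚ) ^ Module.finrank ℚ k :=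
      one_lt_pow₀ (by exact_mod_cast hp.one_lt) Module.finrank_pos.ne'
    rw [abs_of_pos (by positivity)]
    exact h1.ne'
  have hne : (Ideal.span {(p : 𝓞 k)} : Ideal (𝓞 k)) ≠ ⊤ := by
    rwa [Ne, Ideal.span_singleton_eq_top]
  obtain ⟨P, hPmax, hle⟩ := Ideal.exists_le_maximal _ hne
  have hPp : (p : 𝓞 k) ∈ P := hle (Ideal.subset_span rfl)
  have hP2 : (p : 𝓞 k) ∉ P ^ 2 := by
    intro h
    refine hPmax.ne_top (Ideal.isUnit_iff.1 (hur P ?_))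
    rw [Ideal.dvd_iff_le, ← sq]
    exact (Ideal.span_singleton_le_iff_mem _).2 h
  -- the integral Eisenstein polynomial
  have hz : ((cyclotomic p ℤ).comp (X + 1)).IsEisensteinAt
      (Ideal.span {(p : ℤ)}) := cyclotomic_comp_X_add_one_isEisensteinAt p
  have hmℤ : ((cyclotomic p ℤ).comp (X + 1)).Monic := by
    have := (cyclotomic.monic p ℤ).comp_X_add_C 1
    simpa using this
  set g : (𝓞 k)[X] :=
    ((cyclotomic p ℤ).comp (X + 1)).map (algebraMap ℤ (𝓞 k)) with hg
  have hmg : g.Monic := hmℤ.map _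
  have hdeg : ((cyclotomic p ℤ).comp (X + 1)).natDegree = p - 1 := by
    rw [natDegree_comp, show (X + 1 : ℤ[X]) = X + C 1 by simp, natDegree_X_add_C, mul_one,
      natDegree_cyclotomic, Nat.totient_prime hp]
  have hdegg : g.natDegree = p - 1 := by
    rw [hg, hmℤ.natDegree_map, hdeg]
  have hcoeff : ∀ n, g.coeff n = algebraMap ℤ (𝓞 k) (((cyclotomic p ℤ).comp (X + 1)).coeff n) :=
    fun n => coeff_map _ n
  have hc0 : ((cyclotomic p ℤ).comp (X + 1)).coeff 0 = (p : ℤ) := by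
    rw [coeff_zero_eq_eval_zero, eval_comp, eval_add, eval_X, eval_one, zero_add,
      eval_one_cyclotomic_prime]
  have hEis : g.IsEisensteinAt P := by
    refine ⟨?_, ?_, ?_⟩
    · rw [hmg.leadingCoeff]
      exact fun h => hPmax.ne_top ((Ideal.eq_top_iff_one P).2 h)
    · intro n hn
      rw [hdegg, ← hdeg] at hn
      rw [hcoeff]
      obtain ⟨m, hm⟩ := Ideal.mem_span_singleton.1 (hz.mem hn)
      rw [hm, map_mul]
      exact P.mul_mem_right _ (by simpa using hPp)
    · rw [hcoeff, hc0]
      simpa using hP2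
  have hirr : Irreducible g := by
    refine hEis.irreducible hPmax.isPrime hmg.isPrimitive ?_
    rw [hdegg]
    have := hp.two_le
    omega
  have hirrk : Irreducible (g.map (algebraMap (𝓞 k) k)) :=
    (hmg.irreducible_iff_irreducible_map_fraction_map).1 hirr
  have hmap : g.map (algebraMap (𝓞 k) k) = (cyclotomic p k).comp (X + 1) := by
    rw [hg, map_map, ← IsScalarTower.algebraMap_eq, Polynomial.map_comp, map_cyclotomic,
      Polynomial.map_add, Polynomial.map_X, Polynomial.map_one]
  rw [hmap] at hirrk
  have hcomp : (algEquivAevalXAddC (1 : k)) (cyclotomic p k) = (cyclotomic p k).comp (X + 1) := by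
    simp [algEquivAevalXAddC, ← comp_eq_aeval]
  have : Irreducible (cyclotomic p k) := by
    rw [← MulEquiv.irreducible_iff (algEquivAevalXAddC (1 : k)).toMulEquiv]
    simpa [hcomp] using hirrk
  rwa [cyclotomic_prime] at this
end

section
/- Let k be a number field and p a prime number unramified in k. Then the degree [k(ζ_p) : k] equals p − 1, where ζ_p is a primitive p-th root of unity. -/
open NumberField IntermediateField Polynomial



/-- If `x^2 ∈ (p)` in `𝓞 k` and `p ∤ disc k`, then `x ∈ (p)`. -/
lemma key_sq (k : Type) [Field k] [NumberField k] (p : ℕ) (hp : p.Prime) (hur : ¬ ((p : ℤ) ∣ NumberField.discr k))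
    (x : 𝓞 k) (hx : x ^ 2 ∈ Ideal.span {(p : 𝓞 k)}) : x ∈ Ideal.span {(p : 𝓞 k)} := by
  classical
  let b := RingOfIntegers.basis k
  let c : ℤ →+* ZMod p := Int.castRingHom (ZMod p)
  haveI : Fact p.Prime := ⟨hp⟩
  have hpO : (p : 𝓞 k) = ((p : ℤ) : 𝓞 k) := by push_cast; rfl
  -- the trace of any u with u^2 ∈ (p) maps to 0 in ZMod p
  have htr : ∀ u : 𝓞 k, u ^ 2 ∈ Ideal.span {(p : 𝓞 k)} →
      c (Algebra.trace ℤ (𝓞 k) u) = 0 := by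
    intro u hu
    obtain ⟨z, hz⟩ := Ideal.mem_span_singleton'.mp hu
    have hmat : (c.mapMatrix (Algebra.leftMulMatrix b u)) ^ 2 = 0 := by
      have h2 : u ^ 2 = (p : ℤ) • z := by rw [← hz, zsmul_eq_mul]; push_cast; ring
      have h1 : (Algebra.leftMulMatrix b) u ^ 2 = (p : ℤ) • (Algebra.leftMulMatrix b) z := by
        rw [← map_pow, h2, map_smul]
      rw [← map_pow, h1]
      ext i j
      push_cast [RingHom.mapMatrix_apply, Matrix.map_apply, c]
      simp
    have hnil : IsNilpotent (Matrix.trace (c.mapMatrix (Algebra.leftMulMatrix b u))) :=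
      Matrix.isNilpotent_trace_of_isNilpotent ⟨2, hmat⟩
    have h0 : Matrix.trace (c.mapMatrix (Algebra.leftMulMatrix b u)) = 0 := hnil.eq_zero
    rw [Algebra.trace_eq_matrix_trace b u, ← h0]
    simp [Matrix.trace, RingHom.mapMatrix_apply, Matrix.map_apply]
  -- trace matrix is invertible mod p
  have hdet : c (Algebra.traceMatrix ℤ ⇑b).det ≠ 0 := by
    intro h
    apply hur
    rw [show (Algebra.traceMatrix ℤ ⇑b).det = NumberField.discr k from rfl] at h
    exact (ZMod.intCast_zmod_eq_zero_iff_dvd _ p).mp h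
  by_contra hxmem
  -- coordinates of x mod p
  set v : Module.Free.ChooseBasisIndex ℤ (𝓞 k) → ℤ := fun i => b.repr x i with hv
  have hv' : ∃ i, c (v i) ≠ 0 := by
    by_contra h
    push_neg at h
    apply hxmem
    have hdvd : ∀ i, (p : ℤ) ∣ v i := fun i =>
      (ZMod.intCast_zmod_eq_zero_iff_dvd _ p).mp (h i)
    rw [Ideal.mem_span_singleton']
    refine ⟨∑ i, (v i / (p : ℤ)) • b i, ?_⟩
    calc (∑ i, (v i / (p : ℤ)) • b i) * (p : 𝓞 k)
        = ∑ i, ((v i / (p : ℤ)) * (p : ℤ)) • b i := by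
          rw [Finset.sum_mul]
          refine Finset.sum_congr rfl fun i _ => ?_
          rw [smul_mul_assoc, hpO, mul_comm (b i), ← zsmul_eq_mul, smul_smul]
      _ = ∑ i, v i • b i := by
          refine Finset.sum_congr rfl fun i _ => ?_
          rw [Int.ediv_mul_cancel (hdvd i)]
      _ = x := b.sum_repr x
  obtain ⟨i, hi⟩ := hv'
  -- the trace pairing kills x
  have hrow : ∀ j, c (Algebra.trace ℤ (𝓞 k) (b j * x)) = 0 := by
    intro j
    apply htr
    have h : (b j * x) ^ 2 = (b j) ^ 2 * x ^ 2 := by ring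
    rw [h]
    exact Ideal.mul_mem_left _ _ hx
  -- write trace (b j * x) as matrix-vector product
  have hmv : (c.mapMatrix (Algebra.traceMatrix ℤ ⇑b)).mulVec (fun i => c (v i)) = 0 := by
    funext j
    have h1 : (Algebra.traceMatrix ℤ ⇑b).mulVec v j = Algebra.trace ℤ (𝓞 k) (b j * x) := by
      rw [Matrix.mulVec]
      simp only [dotProduct, Algebra.traceMatrix_apply, Algebra.traceForm_apply]
      have hx' : x = ∑ i, v i • b i := (b.sum_repr x).symm
      calc ∑ i, Algebra.trace ℤ (𝓞 k) (b j * b i) * v i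
          = Algebra.trace ℤ (𝓞 k) (∑ i, v i • (b j * b i)) := by
            rw [map_sum]
            refine Finset.sum_congr rfl fun i _ => ?_
            rw [map_smul, smul_eq_mul, mul_comm]
        _ = Algebra.trace ℤ (𝓞 k) (b j * x) := by
            rw [hx']; congr 1
            rw [Finset.mul_sum]
            refine Finset.sum_congr rfl fun i _ => ?_
            rw [mul_smul_comm]
    have hcomm : (c.mapMatrix (Algebra.traceMatrix ℤ ⇑b)).mulVec (fun i => c (v i)) j
        = c ((Algebra.traceMatrix ℤ ⇑b).mulVec v j) := by
      simp [Matrix.mulVec, dotProduct, RingHom.mapMatrix_apply, Matrix.map_apply]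
    rw [hcomm, h1, hrow]
    rfl
  have hinj : Function.Injective (c.mapMatrix (Algebra.traceMatrix ℤ ⇑b)).mulVec := by
    rw [Matrix.mulVec_injective_iff_isUnit, Matrix.isUnit_iff_isUnit_det,
      ← RingHom.map_det]
    exact isUnit_iff_ne_zero.mpr hdet
  have h0 : (fun i => c (v i)) = (0 : Module.Free.ChooseBasisIndex ℤ (𝓞 k) → ZMod p) := by
    apply hinj
    rw [hmv, Matrix.mulVec_zero]
  exact hi (congrFun h0 i)

lemma exists_prime (k : Type) [Field k] [NumberField k] (p : ℕ) (hp : p.Prime)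
    (hur : ¬ ((p : ℤ) ∣ NumberField.discr k)) :
    ∃ P : Ideal (𝓞 k), P.IsMaximal ∧ (p : 𝓞 k) ∈ P ∧ (p : 𝓞 k) ∉ P ^ 2 := by
  haveI : Fact p.Prime := ⟨hp⟩
  set I : Ideal (𝓞 k) := Ideal.span {(p : 𝓞 k)} with hI
  have hpne : (p : 𝓞 k) ≠ 0 := Nat.cast_ne_zero.mpr hp.ne_zero
  have hIbot : I ≠ ⊥ := by simp [hI, Ideal.span_singleton_eq_bot, hpne]
  have hItop : I ≠ ⊤ := by
    rw [hI, Ne, Ideal.span_singleton_eq_top]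
    intro hu
    have h1 : (p : 𝓞 k) = algebraMap ℤ (𝓞 k) (p : ℤ) := by push_cast; rfl
    have h2 : IsUnit (Algebra.norm ℤ (p : 𝓞 k)) := hu.map (Algebra.norm ℤ)
    rw [h1] at h2
    rw [Algebra.norm_algebraMap_of_basis (RingOfIntegers.basis k) (p : ℤ)] at h2
    set n := Fintype.card (Module.Free.ChooseBasisIndex ℤ (𝓞 k)) with hn
    have h3 : 0 < n := Fintype.card_pos
    rcases Int.isUnit_iff.mp h2 with h | h
    · have := hp.two_le
      have : (2:ℤ) ≤ (p:ℤ) := by exact_mod_cast this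
      have h7 : (2:ℤ) ^ n ≤ (p:ℤ) ^ n := pow_le_pow_left₀ (by norm_num) this n
      have h8 : (2:ℤ) ^ 1 ≤ (2:ℤ) ^ n := pow_le_pow_right₀ (by norm_num) h3
      rw [h] at h7
      norm_num at h8
      omega
    · have hpos : 0 < (p:ℤ) ^ n := pow_pos (by exact_mod_cast hp.pos) _
      omega
  obtain ⟨P, hPmax, hIP⟩ := Ideal.exists_le_maximal I hItop
  refine ⟨P, hPmax, hIP (Ideal.subset_span rfl), ?_⟩
  intro hp2
  have hIle : I ≤ P ^ 2 := by rw [hI, Ideal.span_le]; simpa using hp2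
  obtain ⟨J, hJ⟩ : P ^ 2 ∣ I := Ideal.dvd_iff_le.mpr hIle
  have hJ0 : J ≠ 0 := by
    rintro rfl
    rw [mul_zero] at hJ
    exact hIbot (by simpa using hJ)
  have hP0 : P ≠ 0 := by
    rintro rfl
    exact hpne (by simpa using hIP (Ideal.subset_span rfl))
  have hPJ0 : P * J ≠ 0 := mul_ne_zero hP0 hJ0
  have hle : P ^ 2 * J ≤ P * J :=
    Ideal.mul_mono_left (Ideal.pow_le_self two_ne_zero)
  have hlt : P ^ 2 * J < P * J := by
    refine lt_of_le_of_ne hle ?_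
    intro heq
    have h4 : P * (P * J) = 1 * (P * J) := by
      rw [one_mul]
      conv_rhs => rw [← heq]
      ring
    have h5 := mul_right_cancel₀ hPJ0 h4
    exact hPmax.ne_top (by simpa [Ideal.one_eq_top] using h5)
  obtain ⟨y, hy1, hy2⟩ := SetLike.exists_of_lt hlt
  have hysq : y ^ 2 ∈ I := by
    rw [hJ]
    have h6 : y ^ 2 ∈ (P * J) * (P * J) := by rw [pow_two]; exact Ideal.mul_mem_mul hy1 hy1
    have h7 : (P * J) * (P * J) = P ^ 2 * (J * J) := by ring
    rw [h7] at h6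
    exact Ideal.mul_mono_right Ideal.mul_le_left h6
  exact hy2 (hJ ▸ key_sq k p hp hur y hysq)


set_option synthInstance.maxHeartbeats 1000000 in
set_option maxHeartbeats 1000000 in
lemma cyclo_irred (k : Type) [Field k] [NumberField k] (p : ℕ) (hp : p.Prime)
    (hur : ¬ ((p : ℤ) ∣ NumberField.discr k)) :
    Irreducible ((cyclotomic p (𝓞 k)).comp (X + C 1)) := by
  haveI : Fact p.Prime := ⟨hp⟩
  obtain ⟨P, hPmax, hpP, hpP2⟩ := exists_prime k p hp hur
  set f := (cyclotomic p (𝓞 k)).comp (X + C 1) with hf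
  have hmonic : f.Monic := (cyclotomic.monic p _).comp_X_add_C 1
  have hdeg : f.natDegree = p - 1 := by
    rw [hf, natDegree_comp, natDegree_X_add_C, natDegree_cyclotomic, Nat.totient_prime hp,
      mul_one]
  have hcoeff0 : f.coeff 0 = (p : 𝓞 k) := by
    rw [coeff_zero_eq_eval_zero, hf, eval_comp]
    simp [eval_one_cyclotomic_prime]
  let F := 𝓞 k ⧸ P
  have h0 : (p : F) = 0 := by
    rw [← map_natCast (Ideal.Quotient.mk P) p, Ideal.Quotient.eq_zero_iff_mem]
    exact hpP
  haveI hchar : CharP F p := by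
    have h1 := CharP.ringChar_of_prime_eq_zero hp h0
    rw [← h1]
    exact ringChar.charP F
  have hcomp : f * X = (X + C 1 : (𝓞 k)[X]) ^ p - 1 := by
    have h2 := congrArg (fun q : (𝓞 k)[X] => q.comp (X + C 1))
      (cyclotomic_prime_mul_X_sub_one (𝓞 k) p)
    simp only [mul_comp, sub_comp, X_comp, one_comp, pow_comp] at h2
    simpa [hf] using h2
  have hmapmul : (f.map (Ideal.Quotient.mk P)) * X = X ^ p := by
    have h3 := congrArg (Polynomial.map (Ideal.Quotient.mk P)) hcomp
    simp only [Polynomial.map_mul, Polynomial.map_sub, Polynomial.map_pow, Polynomial.map_add,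
      Polynomial.map_X, Polynomial.map_one, Polynomial.map_C, map_one] at h3
    rw [h3, add_pow_char, one_pow]
    ring
  have hmap : f.map (Ideal.Quotient.mk P) = X ^ (p - 1) := by
    apply mul_right_cancel₀ (X_ne_zero : (X : F[X]) ≠ 0)
    rw [hmapmul, ← pow_succ, Nat.sub_add_cancel hp.one_lt.le]
  have hmem : ∀ {n : ℕ}, n < f.natDegree → f.coeff n ∈ P := by
    intro n hn
    rw [hdeg] at hn
    have h4 := congrArg (fun q : F[X] => q.coeff n) hmap
    simp only [coeff_map, coeff_X_pow] at h4
    rw [if_neg hn.ne] at h4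
    exact Ideal.Quotient.eq_zero_iff_mem.mp h4
  have hEis : f.IsEisensteinAt P :=
    hmonic.isEisensteinAt_of_mem_of_notMem hPmax.ne_top hmem (by rwa [hcoeff0])
  exact hEis.irreducible hPmax.isPrime hmonic.isPrimitive
    (by rw [hdeg]; have := hp.two_le; omega)

set_option synthInstance.maxHeartbeats 1000000 in
set_option maxHeartbeats 1000000 in
/-- if `p` is a prime unramified in the number field `k` (equivalently,
`p` does not divide the discriminant of `k`), then `[k(ζ_p) : k] = p - 1`. -/
theorem stmt_1 (k : Type) [Field k] [NumberField k] (p : ℕ) (hp : p.Prime)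
    (hur : ¬ ((p : ℤ) ∣ NumberField.discr k))
    (ζ : AlgebraicClosure k) (hζ : IsPrimitiveRoot ζ p) :
    Module.finrank k (IntermediateField.adjoin k {ζ} :
      IntermediateField k (AlgebraicClosure k)) = p - 1 := by
  haveI : Fact p.Prime := ⟨hp⟩
  have hirrO := cyclo_irred k p hp hur
  have hmonicO : ((cyclotomic p (𝓞 k)).comp (X + C 1)).Monic :=
    (cyclotomic.monic p _).comp_X_add_C 1
  have hmapk : ((cyclotomic p (𝓞 k)).comp (X + C 1)).map (algebraMap (𝓞 k) k)
      = (cyclotomic p k).comp (X + C 1) := by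
    rw [Polynomial.map_comp, map_cyclotomic]
    simp
  have hirrk : Irreducible ((cyclotomic p k).comp (X + C 1)) := by
    rw [← hmapk]
    exact (hmonicO.irreducible_iff_irreducible_map_fraction_map).mp hirrO
  set ζ' : AlgebraicClosure k := ζ - 1 with hζ'
  have hroot : aeval ζ' ((cyclotomic p k).comp (X + C 1)) = 0 := by
    rw [aeval_comp]
    have h5 : aeval ζ' (X + C 1 : k[X]) = ζ := by
      simp [hζ']
    rw [h5, aeval_def, ← eval_map, map_cyclotomic]
    exact (hζ.isRoot_cyclotomic hp.pos)
  have hmonick : ((cyclotomic p k).comp (X + C 1)).Monic :=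
    (cyclotomic.monic p k).comp_X_add_C 1
  have hmin : minpoly k ζ' = (cyclotomic p k).comp (X + C 1) :=
    (minpoly.eq_of_irreducible_of_monic hirrk hroot hmonick).symm
  have hadj : (adjoin k {ζ} : IntermediateField k (AlgebraicClosure k)) = adjoin k {ζ'} := by
    apply le_antisymm
    · rw [adjoin_le_iff, Set.singleton_subset_iff]
      have : ζ = ζ' + 1 := by rw [hζ']; ring
      rw [this]
      exact add_mem (mem_adjoin_simple_self k ζ') (one_mem _)
    · rw [adjoin_le_iff, Set.singleton_subset_iff]
      exact sub_mem (mem_adjoin_simple_self k ζ) (one_mem _)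
  have hint : IsIntegral k ζ' :=
    ⟨(cyclotomic p k).comp (X + C 1), hmonick, by rwa [← aeval_def]⟩
  rw [hadj, IntermediateField.adjoin.finrank hint, hmin, natDegree_comp, natDegree_X_add_C,
    natDegree_cyclotomic, Nat.totient_prime hp, mul_one]
end

section
/- Let π be a finite group and M a π-lattice with a flabby resolution 0 → M → Q → E → 0 (Q permutation, E flabby). Then the similarity class [E] in the flabby class monoid F_π is uniquely determined by M: if 0 → M → Q' → E' → 0 is another flabby resolution, then E ⊕ Q'' ≅ E' ⊕ Q''' for some permutation lattices Q'', Q'''. -/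
open scoped Classical

/-- A bundled `G`-lattice: a finitely generated `ℤ`-free abelian group with `G`-action. -/
structure LatticeRep (G : Type) [Group G] where
  carrier : Type
  [acg : AddCommGroup carrier]
  [mact : DistribMulAction G carrier]
  [fin : Module.Finite ℤ carrier]
  [free : Module.Free ℤ carrier]

attribute [instance] LatticeRep.acg LatticeRep.mact LatticeRep.fin LatticeRep.free

/-- A `G`-lattice is a permutation lattice if it has a `ℤ`-basis permuted by `G`. -/
def IsPermutationLattice (G : Type) [Group G] (M : Type) [AddCommGroup M]
    [DistribMulAction G M] : Prop :=
  ∃ (n : ℕ) (b : Module.Basis (Fin n) ℤ M), ∀ g : G, ∃ e : Equiv.Perm (Fin n), ∀ i, g • (b i) = b (e i)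

/-- Flabbiness: the Tate cohomology `Ĥ⁻¹(H, M)` vanishes for every subgroup `H ≤ G`,
i.e. every element killed by the norm of `H` lies in the augmentation submodule. -/
def IsFlabby (G : Type) [Group G] [Fintype G] (M : Type) [AddCommGroup M]
    [DistribMulAction G M] : Prop :=
  ∀ H : Subgroup G, ∀ m : M, (∑ h ∈ (H : Set G).toFinset, h • m) = 0 →
    m ∈ AddSubgroup.closure {x : M | ∃ h ∈ H, ∃ y : M, x = h • y - y}

/-- Coflabbiness: `H¹(H, M) = 0` for every subgroup `H ≤ G`: every `1`-cocycle is a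
coboundary. -/
def IsCoflabby (G : Type) [Group G] (M : Type) [AddCommGroup M]
    [DistribMulAction G M] : Prop :=
  ∀ H : Subgroup G, ∀ f : H → M, (∀ g h : H, f (g * h) = f g + (g : G) • f h) →
    ∃ m : M, ∀ g : H, f g = (g : G) • m - m

/-- An equivariant isomorphism of abelian groups with `G`-action. -/
def EqvIso (G : Type) [Group G] (M N : Type) [AddCommGroup M] [AddCommGroup N]
    [DistribMulAction G M] [DistribMulAction G N] : Prop :=
  ∃ e : M ≃+ N, ∀ (g : G) (x : M), e (g • x) = g • e x

/-- Two lattices are similar if they become isomorphic after adding permutation lattices. -/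
def SimilarLattices (G : Type) [Group G] (M N : Type) [AddCommGroup M] [AddCommGroup N]
    [DistribMulAction G M] [DistribMulAction G N] : Prop :=
  ∃ Q₁ Q₂ : LatticeRep G, IsPermutationLattice G Q₁.carrier ∧
    IsPermutationLattice G Q₂.carrier ∧ EqvIso G (M × Q₁.carrier) (N × Q₂.carrier)

/-- An invertible lattice: a direct summand of a permutation lattice. -/
def IsInvertibleLattice (G : Type) [Group G] (M : Type) [AddCommGroup M]
    [DistribMulAction G M] : Prop :=
  ∃ N Q : LatticeRep G, IsPermutationLattice G Q.carrier ∧ EqvIso G (M × N.carrier) Q.carrier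

/-- `0 → M → Q → E → 0` is a flabby resolution: `Q` is a permutation lattice, `E` is flabby,
the maps are `G`-equivariant, and the sequence is exact. -/
def IsFlabbyResolution (G : Type) [Group G] [Fintype G] (M : Type) [AddCommGroup M]
    [DistribMulAction G M] (Q E : LatticeRep G)
    (f : M →+ Q.carrier) (g : Q.carrier →+ E.carrier) : Prop :=
  IsPermutationLattice G Q.carrier ∧ IsFlabby G E.carrier ∧
    (∀ (σ : G) (x : M), f (σ • x) = σ • f x) ∧
    (∀ (σ : G) (x : Q.carrier), g (σ • x) = σ • g x) ∧
    Function.Injective f ∧ Function.Surjective g ∧ g.ker = f.range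

theorem splitting_lemma (G : Type) [Group G] [Fintype G]
    (P X F : Type) [AddCommGroup P] [AddCommGroup X] [AddCommGroup F]
    [DistribMulAction G P] [DistribMulAction G X] [DistribMulAction G F]
    [Module.Finite ℤ F] [Module.Free ℤ F]
    (hP : IsPermutationLattice G P) (hF : IsFlabby G F)
    (ι : P →+ X) (π : X →+ F)
    (hιe : ∀ (g : G) (p : P), ι (g • p) = g • ι p)
    (hπe : ∀ (g : G) (x : X), π (g • x) = g • π x)
    (hι : Function.Injective ι) (hπ : Function.Surjective π)
    (hker : π.ker = ι.range) :
    ∃ e : X ≃+ P × F, ∀ (g : G) (x : X), e (g • x) = g • e x := by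
  obtain ⟨n, b, hb⟩ := hP
  -- the permutation action on indices
  set ρ : G → Equiv.Perm (Fin n) := fun g => Classical.choose (hb g) with hρdef
  have hρ : ∀ (g : G) (i : Fin n), g • (b i) = b (ρ g i) := fun g => Classical.choose_spec (hb g)
  have hρmul : ∀ (g₁ g₂ : G) (i : Fin n), ρ (g₁ * g₂) i = ρ g₁ (ρ g₂ i) := by
    intro g₁ g₂ i
    apply b.injective
    rw [← hρ, ← hρ, ← hρ, mul_smul]
  have hρ1 : ∀ i : Fin n, ρ (1 : G) i = i := by
    intro i
    apply b.injective
    rw [← hρ, one_smul]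
  have hρinv : ∀ (g : G) (i : Fin n), ρ g⁻¹ (ρ g i) = i := by
    intro g i
    rw [← hρmul, inv_mul_cancel, hρ1]
  have hρinv' : ∀ (g : G) (i : Fin n), ρ g (ρ g⁻¹ i) = i := by
    intro g i
    rw [← hρmul, mul_inv_cancel, hρ1]
  -- ℤ-linear section of π
  obtain ⟨s, hs⟩ := Module.projective_lifting_property (π.toIntLinearMap) (LinearMap.id) hπ
  have hs' : ∀ y : F, π (s y) = y := by
    intro y
    have := congrArg (fun (t : F →ₗ[ℤ] F) => t y) hs
    simpa using this
  -- retraction ψ : X →+ P with ψ ∘ ι = id (ℤ-linear, not equivariant)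
  have hmem : ∀ x : X, x - s (π x) ∈ ι.range := by
    intro x
    rw [← hker, AddMonoidHom.mem_ker, map_sub, hs', sub_self]
  set k : X →+ ↥ι.range :=
    AddMonoidHom.codRestrict (AddMonoidHom.id X - (s.toAddMonoidHom.comp π)) ι.range
      (by intro x; simpa using hmem x) with hkdef
  set eι : P ≃+ ↥ι.range := AddMonoidHom.ofInjective hι with heι
  set ψ : X →+ P := (eι.symm.toAddMonoidHom).comp k with hψdef
  have hπι : ∀ p : P, π (ι p) = 0 := by
    intro p
    have : ι p ∈ π.ker := by rw [hker]; exact ⟨p, rfl⟩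
    exact this
  have hψι : ∀ p : P, ψ (ι p) = p := by
    intro p
    have hk : k (ι p) = eι p := by
      apply Subtype.ext
      have : (eι p : X) = ι p := by
        rw [heι]; exact AddMonoidHom.ofInjective_apply hι
      simp [hkdef, hπι p, this]
    simp [hψdef, hk]
  -- coordinate functionals
  set ψc : Fin n → (X →+ ℤ) := fun j => ((b.coord j).toAddMonoidHom).comp ψ with hψcdef
  have hψcι : ∀ j c : Fin n, ψc j (ι (b c)) = if j = c then 1 else 0 := by
    intro j c
    simp [hψcdef, hψι, Module.Basis.coord_apply, Module.Basis.repr_self, Finsupp.single_apply, eq_comm]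
  -- Core: for each index c, an integral functional on X invariant under the stabilizer of c,
  -- taking value δ_{ck} on ι (b k).
  have key : ∀ c : Fin n, ∃ φ : X →+ ℤ,
      (∀ g : G, ρ g c = c → ∀ x : X, φ (g • x) = φ x) ∧
      (∀ k : Fin n, φ (ι (b k)) = if c = k then 1 else 0) := by
    intro c
    set H : Subgroup G :=
      { carrier := {g : G | ρ g c = c}
        one_mem' := hρ1 c
        mul_mem' := by
          intro a b ha hb
          simp only [Set.mem_setOf_eq] at *
          rw [hρmul, hb, ha]
        inv_mem' := by
          intro a ha
          simp only [Set.mem_setOf_eq] at *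
          conv_lhs => rw [← ha]
          rw [hρinv] } with hHdef
    have hmemH : ∀ g : G, g ∈ (H : Set G).toFinset ↔ ρ g c = c := by
      intro g
      rw [Set.mem_toFinset]
      exact Iff.rfl
    set Hfin : Finset G := (H : Set G).toFinset with hHfin
    set N : ℕ := Hfin.card with hNdef
    have hNne : (1:G) ∈ Hfin := (hmemH 1).2 (hρ1 c)
    have hN0 : (N : ℚ) ≠ 0 := by
      have : 0 < N := Finset.card_pos.mpr ⟨1, hNne⟩
      exact_mod_cast this.ne'
    -- the averaged functional T
    set T : X →+ ℤ := ∑ h ∈ Hfin, (ψc c).comp (DistribMulAction.toAddMonoidHom X h) with hTdef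
    have hT : ∀ x : X, T x = ∑ h ∈ Hfin, ψc c (h • x) := by
      intro x
      rw [hTdef, AddMonoidHom.finset_sum_apply]
      rfl
    have hTinv : ∀ g : G, ρ g c = c → ∀ x : X, T (g • x) = T x := by
      intro g hg x
      rw [hT, hT]
      refine Finset.sum_bij' (fun h _ => h * g) (fun h _ => h * g⁻¹) ?_ ?_ ?_ ?_ ?_
      · intro a ha
        rw [hmemH] at *
        rw [hρmul, hg, ha]
      · intro a ha
        rw [hmemH] at *
        have : ρ g⁻¹ c = c := by conv_lhs => rw [← hg, hρinv]
        rw [hρmul, this, ha]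
      · intro a _; exact mul_inv_cancel_right a g
      · intro a _; exact inv_mul_cancel_right a g
      · intro a _; rw [mul_smul]
    have hTι : ∀ k : Fin n, T (ι (b k)) = if c = k then (N : ℤ) else 0 := by
      intro k
      rw [hT]
      have hterm : ∀ h ∈ Hfin, ψc c (h • ι (b k)) = if c = k then 1 else 0 := by
        intro h hh
        rw [hmemH] at hh
        rw [← hιe, hρ, hψcι]
        by_cases hck : c = k
        · subst hck
          rw [if_pos hh.symm, if_pos rfl]
        · rw [if_neg, if_neg hck]
          intro heq
          apply hck
          have h1 : ρ h⁻¹ c = c := by conv_lhs => rw [← hh, hρinv]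
          have h2 : k = ρ h⁻¹ (ρ h k) := (hρinv h k).symm
          rw [← heq, h1] at h2
          exact h2.symm
      rw [Finset.sum_congr rfl hterm]
      split_ifs
      · simp [hNdef]
      · exact Finset.sum_const_zero
    -- the rational functional ω = ψc c - T/N
    set ω : X →+ ℚ := AddMonoidHom.mk' (fun x => ((ψc c x : ℚ) - (T x : ℚ) / N))
      (by intro a b2; push_cast [map_add]; ring) with hωdef
    have hωapp : ∀ x : X, ω x = (ψc c x : ℚ) - (T x : ℚ) / N := fun x => rfl
    have hωι : ∀ p : P, ω (ι p) = 0 := by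
      have hlin : (ω.comp ι).toIntLinearMap = (0 : P →ₗ[ℤ] ℚ) := by
        apply Module.Basis.ext b
        intro i
        show (ω.comp ι) (b i) = 0
        rw [AddMonoidHom.comp_apply, hωapp, hψcι, hTι]
        by_cases hci : c = i
        · rw [if_pos hci, if_pos hci]
          push_cast
          field_simp
          norm_num
        · rw [if_neg hci, if_neg hci]
          norm_num
      intro p
      have := congrArg (fun (t : P →ₗ[ℤ] ℚ) => t p) hlin
      simpa using this
    have hωker : ∀ x : X, π x = 0 → ω x = 0 := by
      intro x hx
      have : x ∈ ι.range := by rw [← hker]; exact hx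
      obtain ⟨p, hp⟩ := this
      rw [← hp]; exact hωι p
    have hωinv : ∀ g : G, ρ g c = c → ∀ x : X,
        ω (g • x) - ω x = ((ψc c (g • x) - ψc c x : ℤ) : ℚ) := by
      intro g hg x
      rw [hωapp, hωapp, hTinv g hg]
      push_cast
      ring
    -- descend to F
    set χ : F → X := fun y => Classical.choose (hπ y) with hχdef
    have hχ : ∀ y : F, π (χ y) = y := fun y => Classical.choose_spec (hπ y)
    set μ : F → ℚ := fun y => ω (χ y) with hμdef
    have hμπ : ∀ x : X, μ (π x) = ω x := by
      intro x
      have h0 : π (χ (π x) - x) = 0 := by rw [map_sub, hχ, sub_self]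
      have h1 := hωker _ h0
      rw [map_sub] at h1
      have : ω (χ (π x)) = ω x := by linarith
      exact this
    have hμadd : ∀ y z : F, μ (y + z) = μ y + μ z := by
      intro y z
      calc μ (y + z) = μ (π (χ y + χ z)) := by rw [map_add, hχ, hχ]
        _ = ω (χ y + χ z) := hμπ _
        _ = ω (χ y) + ω (χ z) := map_add ω _ _
        _ = μ y + μ z := rfl
    set μhom : F →+ ℚ := AddMonoidHom.mk' μ hμadd with hμhom
    set Zran : AddSubgroup ℚ := (Int.castAddHom ℚ).range with hZran
    have hμgen : ∀ g : G, ρ g c = c → ∀ x : X,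
        μ (g • π x - π x) = ((ψc c (g • x) - ψc c x : ℤ) : ℚ) := by
      intro g hg x
      have : g • π x - π x = π (g • x - x) := by rw [map_sub, hπe]
      rw [this, hμπ, map_sub, hωinv g hg]
    -- flabbiness: μ is integral on the kernel of the norm
    have hμker : ∀ y : F, (∑ h ∈ (H : Set G).toFinset, h • y) = 0 → μ y ∈ Zran := by
      intro y hy
      have hcl := hF H y hy
      have hle : AddSubgroup.closure {x : F | ∃ h ∈ H, ∃ z : F, x = h • z - z} ≤
          AddSubgroup.comap μhom Zran := by
        rw [AddSubgroup.closure_le]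
        intro x hx
        obtain ⟨h, hh, z, hz⟩ := hx
        have hh' : ρ h c = c := hh
        subst hz
        simp only [SetLike.mem_coe, AddSubgroup.mem_comap]
        have : μhom (h • z - z) = ((ψc c (h • χ z) - ψc c (χ z) : ℤ) : ℚ) := by
          show μ (h • z - z) = _
          conv_lhs => rw [← hχ z]
          exact hμgen h hh' (χ z)
        rw [this]
        exact ⟨_, rfl⟩
      exact hle hcl
    -- the norm map on F and a projection onto its kernel
    set NF : F →+ F := ∑ h ∈ Hfin, DistribMulAction.toAddMonoidHom F h with hNFdef
    have hNF : ∀ y : F, NF y = ∑ h ∈ Hfin, h • y := by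
      intro y
      rw [hNFdef, AddMonoidHom.finset_sum_apply]
      rfl
    have hNFinv : ∀ g : G, ρ g c = c → ∀ y : F, NF (g • y) = NF y := by
      intro g hg y
      rw [hNF, hNF]
      refine Finset.sum_bij' (fun h _ => h * g) (fun h _ => h * g⁻¹) ?_ ?_ ?_ ?_ ?_
      · intro a ha
        rw [hmemH] at *
        rw [hρmul, hg, ha]
      · intro a ha
        rw [hmemH] at *
        have : ρ g⁻¹ c = c := by conv_lhs => rw [← hg, hρinv]
        rw [hρmul, this, ha]
      · intro a _; exact mul_inv_cancel_right a g
      · intro a _; exact inv_mul_cancel_right a g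
      · intro a _; rw [mul_smul]
    set L : F →ₗ[ℤ] F := NF.toIntLinearMap with hLdef
    haveI : Module.Free ℤ ↥(LinearMap.range L) := Module.free_of_finite_type_torsion_free'
    obtain ⟨sec, hsec⟩ :=
      Module.projective_lifting_property L.rangeRestrict LinearMap.id L.surjective_rangeRestrict
    have hsecL : ∀ z : ↥(LinearMap.range L), L (sec z) = (z : F) := by
      intro z
      have := congrArg (fun (t : ↥(LinearMap.range L) →ₗ[ℤ] ↥(LinearMap.range L)) => t z) hsec
      simp only [LinearMap.comp_apply, LinearMap.id_apply] at this
      have := congrArg (fun w : ↥(LinearMap.range L) => (w : F)) this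
      simpa [LinearMap.rangeRestrict] using this
    set pr : F → F := fun y => y - sec (L.rangeRestrict y) with hprdef
    have hpradd : ∀ y z : F, pr (y + z) = pr y + pr z := by
      intro y z
      simp only [hprdef, map_add]
      abel
    have hprker : ∀ y : F, NF (pr y) = 0 := by
      intro y
      show NF (y - sec (L.rangeRestrict y)) = 0
      have : NF (y - sec (L.rangeRestrict y)) = L y - L (sec (L.rangeRestrict y)) := by
        simp [map_sub, hLdef]
      rw [this, hsecL]
      simp [LinearMap.rangeRestrict]
    have hprdiff : ∀ g : G, ρ g c = c → ∀ y : F, pr (g • y) = pr y + (g • y - y) := by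
      intro g hg y
      have hrr : L.rangeRestrict (g • y) = L.rangeRestrict y := by
        apply Subtype.ext
        simp only [LinearMap.rangeRestrict]
        show L (g • y) = L y
        exact hNFinv g hg y
      simp only [hprdef, hrr]
      abel
    -- the corrected functional, rational-valued but integral
    set φQ : X →+ ℚ := AddMonoidHom.mk' (fun x => (ψc c x : ℚ) - μ (pr (π x)))
      (by
        intro a b2
        simp only [map_add, hpradd, hμadd]
        push_cast
        ring) with hφQdef
    have hφQapp : ∀ x : X, φQ x = (ψc c x : ℚ) - μ (pr (π x)) := fun _ => rfl
    have hμpr : ∀ y : F, μ (pr y) ∈ Zran := by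
      intro y
      apply hμker
      rw [← hNF]
      exact hprker y
    have hφQint : ∀ x : X, φQ x ∈ Zran := by
      intro x
      rw [hφQapp]
      exact AddSubgroup.sub_mem _ ⟨ψc c x, rfl⟩ (hμpr _)
    have hφQinv : ∀ g : G, ρ g c = c → ∀ x : X, φQ (g • x) = φQ x := by
      intro g hg x
      rw [hφQapp, hφQapp, hπe, hprdiff g hg, hμadd]
      have : μ (g • π x - π x) = ((ψc c (g • x) - ψc c x : ℤ) : ℚ) := hμgen g hg x
      rw [this]
      push_cast
      ring
    have hφQι : ∀ k : Fin n, φQ (ι (b k)) = if c = k then 1 else 0 := by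
      intro k
      rw [hφQapp, hπι, hψcι]
      have hpr0 : pr (0 : F) = 0 := by
        simp [hprdef, map_zero]
      have hμ0 : μ (0 : F) = 0 := by
        have := hμadd 0 0
        simp at this
        linarith [hμadd 0 0]
      rw [hpr0, hμ0]
      split_ifs <;> norm_num
    -- extract the integer-valued functional
    have hint : ∀ x : X, ∃ m : ℤ, (m : ℚ) = φQ x := by
      intro x
      obtain ⟨m, hm⟩ := hφQint x
      exact ⟨m, hm⟩
    set φf : X → ℤ := fun x => Classical.choose (hint x) with hφf
    have hφfc : ∀ x : X, ((φf x : ℤ) : ℚ) = φQ x := fun x => Classical.choose_spec (hint x)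
    have hcast : Function.Injective (fun m : ℤ => (m : ℚ)) := Int.cast_injective
    have hφfadd : ∀ a b2 : X, φf (a + b2) = φf a + φf b2 := by
      intro a b2
      apply hcast
      show ((φf (a + b2) : ℤ) : ℚ) = ((φf a + φf b2 : ℤ) : ℚ)
      rw [hφfc]
      push_cast
      rw [hφfc, hφfc, map_add]
    refine ⟨AddMonoidHom.mk' φf hφfadd, ?_, ?_⟩
    · intro g hg x
      apply hcast
      show ((φf (g • x) : ℤ) : ℚ) = ((φf x : ℤ) : ℚ)
      rw [hφfc, hφfc, hφQinv g hg]
    · intro k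
      apply hcast
      show ((φf (ι (b k)) : ℤ) : ℚ) = ((if c = k then 1 else 0 : ℤ) : ℚ)
      rw [hφfc, hφQι]
      split_ifs <;> norm_num
  -- choose orbit representatives
  set std : Setoid (Fin n) :=
    ⟨fun i k => ∃ g : G, ρ g i = k,
      fun i => ⟨1, hρ1 i⟩,
      fun {i k} h => by
        obtain ⟨g, hg⟩ := h
        exact ⟨g⁻¹, by rw [← hg, hρinv]⟩,
      fun {i k l} h1 h2 => by
        obtain ⟨g1, hg1⟩ := h1
        obtain ⟨g2, hg2⟩ := h2
        exact ⟨g2 * g1, by rw [hρmul, hg1, hg2]⟩⟩ with hstd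
  set rep : Fin n → Fin n := fun j => (Quotient.mk std j).out with hrepdef
  have hrep1 : ∀ j : Fin n, ∃ g : G, ρ g (rep j) = j := by
    intro j
    exact Quotient.exact (Quotient.out_eq (Quotient.mk std j))
  have hrepinv : ∀ (g : G) (j : Fin n), rep (ρ g j) = rep j := by
    intro g j
    have : Quotient.mk std (ρ g j) = Quotient.mk std j := Quotient.sound ⟨g⁻¹, hρinv g j⟩
    simp only [hrepdef, this]
  set t : Fin n → G := fun j => Classical.choose (hrep1 j) with htdef
  have ht : ∀ j : Fin n, ρ (t j) (rep j) = j := fun j => Classical.choose_spec (hrep1 j)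
  set φs : Fin n → X →+ ℤ := fun c => Classical.choose (key c) with hφsdef
  have hφsinv : ∀ c : Fin n, ∀ g : G, ρ g c = c → ∀ x : X, φs c (g • x) = φs c x :=
    fun c => (Classical.choose_spec (key c)).1
  have hφsι : ∀ c k : Fin n, φs c (ι (b k)) = if c = k then 1 else 0 :=
    fun c => (Classical.choose_spec (key c)).2
  set φ' : Fin n → X →+ ℤ :=
    fun j => (φs (rep j)).comp (DistribMulAction.toAddMonoidHom X ((t j)⁻¹)) with hφ'def
  have hφ'app : ∀ (j : Fin n) (x : X), φ' j x = φs (rep j) ((t j)⁻¹ • x) := fun _ _ => rfl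
  have hφ'ι : ∀ j k : Fin n, φ' j (ι (b k)) = if j = k then 1 else 0 := by
    intro j k
    rw [hφ'app, ← hιe, hρ, hφsι]
    by_cases hjk : j = k
    · subst hjk
      have h2 := hρinv (t j) (rep j)
      rw [ht j] at h2
      rw [if_pos rfl, if_pos h2.symm]
    · rw [if_neg hjk, if_neg]
      intro heq
      apply hjk
      have : ρ (t j) (rep j) = ρ (t j) (ρ ((t j)⁻¹) k) := by rw [← heq]
      rw [ht, hρinv'] at this
      exact this
  have hφ'equiv : ∀ (g : G) (j : Fin n) (x : X), φ' (ρ g j) (g • x) = φ' j x := by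
    intro g j x
    rw [hφ'app, hφ'app, hrepinv]
    set h : G := (t (ρ g j))⁻¹ * g * (t j) with hhdef
    have hfix : ρ h (rep j) = rep j := by
      have h1 : ρ (t (ρ g j)) (rep j) = ρ g j := by
        have := ht (ρ g j)
        rwa [hrepinv g j] at this
      calc ρ h (rep j) = ρ ((t (ρ g j))⁻¹) (ρ g (ρ (t j) (rep j))) := by
            rw [hhdef, hρmul, hρmul]
        _ = ρ ((t (ρ g j))⁻¹) (ρ g j) := by rw [ht]
        _ = ρ ((t (ρ g j))⁻¹) (ρ (t (ρ g j)) (rep j)) := by rw [h1]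
        _ = rep j := hρinv _ _
    have hsmul : h • ((t j)⁻¹ • x) = (t (ρ g j))⁻¹ • (g • x) := by
      rw [smul_smul, smul_smul, hhdef]
      congr 1
      group
    rw [← hsmul, hφsinv _ h hfix]
  -- the equivariant retraction r : X → P
  set r : X →+ P := AddMonoidHom.mk' (fun x => ∑ j : Fin n, φ' j x • b j)
    (by
      intro a b2
      simp only [map_add, add_smul]
      rw [Finset.sum_add_distrib]) with hrdef
  have hrapp : ∀ x : X, r x = ∑ j : Fin n, φ' j x • b j := fun _ => rfl
  have hrι : ∀ p : P, r (ι p) = p := by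
    have hlin : (r.comp ι).toIntLinearMap = LinearMap.id := by
      apply Module.Basis.ext b
      intro i
      show r (ι (b i)) = b i
      rw [hrapp]
      have : ∀ j : Fin n, φ' j (ι (b i)) • b j = if j = i then b j else 0 := by
        intro j
        rw [hφ'ι]
        split_ifs <;> simp
      rw [Finset.sum_congr rfl (fun j _ => this j), Finset.sum_ite_eq' Finset.univ i b]
      simp
    intro p
    have := congrArg (fun (t : P →ₗ[ℤ] P) => t p) hlin
    simpa using this
  have hrequiv : ∀ (g : G) (x : X), r (g • x) = g • r x := by
    intro g x
    rw [hrapp, hrapp]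
    have hrhs : g • ∑ j : Fin n, φ' j x • b j = ∑ j : Fin n, φ' j x • b (ρ g j) := by
      calc g • ∑ j : Fin n, φ' j x • b j
          = ∑ j : Fin n, g • (φ' j x • b j) :=
            map_sum (DistribMulAction.toAddMonoidHom P g) _ _
        _ = ∑ j : Fin n, φ' j x • b (ρ g j) := by
            apply Finset.sum_congr rfl
            intro j _
            rw [← hρ]
            exact smul_comm g (φ' j x) (b j)
    rw [hrhs]
    refine (Fintype.sum_equiv (ρ g) _ _ ?_).symm
    intro j
    rw [hφ'equiv g j x]
  -- assemble the isomorphism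
  have hbij : Function.Bijective (r.prod π) := by
    constructor
    · rw [injective_iff_map_eq_zero]
      intro x hx
      have hx1 : r x = 0 := congrArg Prod.fst hx
      have hx2 : π x = 0 := congrArg Prod.snd hx
      have : x ∈ ι.range := by rw [← hker]; exact hx2
      obtain ⟨p, hp⟩ := this
      rw [← hp] at hx1 ⊢
      rw [hrι] at hx1
      rw [hx1, map_zero]
    · rintro ⟨p, y⟩
      obtain ⟨x₀, hx₀⟩ := hπ y
      refine ⟨x₀ + ι (p - r x₀), ?_⟩
      show (r (x₀ + ι (p - r x₀)), π (x₀ + ι (p - r x₀))) = (p, y)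
      rw [map_add, map_add, hrι, hπι, hx₀, add_zero]
      ext <;> simp
  refine ⟨AddEquiv.ofBijective (r.prod π) hbij, ?_⟩
  intro g x
  show (r (g • x), π (g • x)) = g • ((r x, π x) : P × F)
  rw [hrequiv, hπe]
  rfl


/-- the similarity class of `E` in a flabby resolution `0 → M → Q → E → 0`
depends only on `M`: given two flabby resolutions of `M`, the flabby quotients `E`, `E'`
become isomorphic after adding suitable permutation lattices. -/
theorem stmt_10 (G : Type) [Group G] [Fintype G] (M : Type) [AddCommGroup M]
    [DistribMulAction G M] [Module.Finite ℤ M] [Module.Free ℤ M]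
    (Q E Q' E' : LatticeRep G)
    (f : M →+ Q.carrier) (g : Q.carrier →+ E.carrier)
    (f' : M →+ Q'.carrier) (g' : Q'.carrier →+ E'.carrier)
    (h : IsFlabbyResolution G M Q E f g) (h' : IsFlabbyResolution G M Q' E' f' g') :
    SimilarLattices G E.carrier E'.carrier := by
  obtain ⟨hQperm, hEflab, hfe, hge, hfinj, hgsur, hgker⟩ := h
  obtain ⟨hQ'perm, hE'flab, hf'e, hg'e, hf'inj, hg'sur, hg'ker⟩ := h'
  -- the pushout X = (Q × Q') / M, with M embedded antidiagonally
  set S : AddSubgroup (Q.carrier × Q'.carrier) := (f.prod (-f')).range with hSdef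
  have hSmem : ∀ x : Q.carrier × Q'.carrier, x ∈ S ↔ ∃ m : M, (f m, -f' m) = x := by
    intro x
    exact Iff.rfl
  set Xq : Type := (Q.carrier × Q'.carrier) ⧸ S with hXdef
  have hstab : ∀ σ : G, S ≤ S.comap (DistribMulAction.toAddMonoidHom (Q.carrier × Q'.carrier) σ) := by
    intro σ x hx
    obtain ⟨m, hm⟩ := (hSmem x).1 hx
    rw [AddSubgroup.mem_comap]
    refine (hSmem _).2 ⟨σ • m, ?_⟩
    rw [← hm]
    show ((f (σ • m), -f' (σ • m)) : Q.carrier × Q'.carrier) = (σ • f m, σ • (-f' m))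
    rw [hfe, hf'e, smul_neg]
  letI : SMul G Xq :=
    ⟨fun σ => QuotientAddGroup.map S S (DistribMulAction.toAddMonoidHom _ σ) (hstab σ)⟩
  have hsmul_mk : ∀ (σ : G) (x : Q.carrier × Q'.carrier),
      (σ • (QuotientAddGroup.mk x : Xq)) = QuotientAddGroup.mk (σ • x) := by
    intro σ x
    exact QuotientAddGroup.map_mk S S _ (hstab σ) x
  letI : MulAction G Xq :=
    { one_smul := by
        intro x
        induction x using QuotientAddGroup.induction_on with
        | H z => rw [hsmul_mk, one_smul]
      mul_smul := by
        intro σ τ x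
        induction x using QuotientAddGroup.induction_on with
        | H z => rw [hsmul_mk, hsmul_mk, hsmul_mk, mul_smul] }
  letI : DistribMulAction G Xq :=
    { smul_zero := by
        intro σ
        show (QuotientAddGroup.map S S (DistribMulAction.toAddMonoidHom _ σ) (hstab σ)) 0 = 0
        exact map_zero _
      smul_add := by
        intro σ x y
        show (QuotientAddGroup.map S S (DistribMulAction.toAddMonoidHom _ σ) (hstab σ)) (x + y) = _
        rw [map_add]
        rfl }
  -- the two exact sequences  0 → Q → X → E' → 0  and  0 → Q' → X → E → 0
  set ιQ : Q.carrier →+ Xq :=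
    (QuotientAddGroup.mk' S).comp (AddMonoidHom.inl Q.carrier Q'.carrier) with hιQdef
  set ιQ' : Q'.carrier →+ Xq :=
    (QuotientAddGroup.mk' S).comp (AddMonoidHom.inr Q.carrier Q'.carrier) with hιQ'def
  have hvanE' : S ≤ (g'.comp (AddMonoidHom.snd Q.carrier Q'.carrier)).ker := by
    intro x hx
    obtain ⟨m, hm⟩ := (hSmem x).1 hx
    rw [AddMonoidHom.mem_ker, ← hm]
    show g' (-f' m) = 0
    have : f' m ∈ g'.ker := by rw [hg'ker]; exact ⟨m, rfl⟩
    rw [map_neg, this]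
    exact neg_zero
  have hvanE : S ≤ (g.comp (AddMonoidHom.fst Q.carrier Q'.carrier)).ker := by
    intro x hx
    obtain ⟨m, hm⟩ := (hSmem x).1 hx
    rw [AddMonoidHom.mem_ker, ← hm]
    show g (f m) = 0
    have : f m ∈ g.ker := by rw [hgker]; exact ⟨m, rfl⟩
    exact this
  set πE' : Xq →+ E'.carrier :=
    QuotientAddGroup.lift S (g'.comp (AddMonoidHom.snd Q.carrier Q'.carrier)) hvanE' with hπE'def
  set πE : Xq →+ E.carrier :=
    QuotientAddGroup.lift S (g.comp (AddMonoidHom.fst Q.carrier Q'.carrier)) hvanE with hπEdef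
  have hπE'mk : ∀ x : Q.carrier × Q'.carrier,
      πE' (QuotientAddGroup.mk x) = g' x.2 := fun x => rfl
  have hπEmk : ∀ x : Q.carrier × Q'.carrier,
      πE (QuotientAddGroup.mk x) = g x.1 := fun x => rfl
  have hιQmk : ∀ q : Q.carrier, ιQ q = QuotientAddGroup.mk (q, 0) := fun q => rfl
  have hιQ'mk : ∀ q : Q'.carrier, ιQ' q = QuotientAddGroup.mk ((0 : Q.carrier), q) := fun q => rfl
  -- equivariance
  have hιQe : ∀ (σ : G) (q : Q.carrier), ιQ (σ • q) = σ • ιQ q := by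
    intro σ q
    rw [hιQmk, hιQmk, hsmul_mk]
    congr 1
    show ((σ • q, 0) : Q.carrier × Q'.carrier) = (σ • q, σ • 0)
    rw [smul_zero]
  have hιQ'e : ∀ (σ : G) (q : Q'.carrier), ιQ' (σ • q) = σ • ιQ' q := by
    intro σ q
    rw [hιQ'mk, hιQ'mk, hsmul_mk]
    congr 1
    show (((0 : Q.carrier), σ • q) : Q.carrier × Q'.carrier) = (σ • 0, σ • q)
    rw [smul_zero]
  have hπE'e : ∀ (σ : G) (x : Xq), πE' (σ • x) = σ • πE' x := by
    intro σ x
    induction x using QuotientAddGroup.induction_on with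
    | H z =>
      rw [hsmul_mk, hπE'mk, hπE'mk]
      show g' (σ • z.2) = σ • g' z.2
      exact hg'e σ z.2
  have hπEe : ∀ (σ : G) (x : Xq), πE (σ • x) = σ • πE x := by
    intro σ x
    induction x using QuotientAddGroup.induction_on with
    | H z =>
      rw [hsmul_mk, hπEmk, hπEmk]
      show g (σ • z.1) = σ • g z.1
      exact hge σ z.1
  -- injectivity / surjectivity / exactness
  have hιQinj : Function.Injective ιQ := by
    rw [injective_iff_map_eq_zero]
    intro q hq
    rw [hιQmk] at hq
    rw [QuotientAddGroup.eq_zero_iff] at hq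
    obtain ⟨m, hm⟩ := (hSmem _).1 hq
    have h2 : f' m = 0 := by
      have := congrArg Prod.snd hm
      simpa using this
    have hm0 : m = 0 := hf'inj (by rw [h2, map_zero])
    have := congrArg Prod.fst hm
    simp only at this
    rw [← this, hm0, map_zero]
  have hιQ'inj : Function.Injective ιQ' := by
    rw [injective_iff_map_eq_zero]
    intro q hq
    rw [hιQ'mk] at hq
    rw [QuotientAddGroup.eq_zero_iff] at hq
    obtain ⟨m, hm⟩ := (hSmem _).1 hq
    have h2 : f m = 0 := by
      have := congrArg Prod.fst hm
      simpa using this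
    have hm0 : m = 0 := hfinj (by rw [h2, map_zero])
    have := congrArg Prod.snd hm
    simp only at this
    rw [← this, hm0, map_zero, neg_zero]
  have hπE'sur : Function.Surjective πE' := by
    intro y
    obtain ⟨q', hq'⟩ := hg'sur y
    exact ⟨QuotientAddGroup.mk ((0 : Q.carrier), q'), hq'⟩
  have hπEsur : Function.Surjective πE := by
    intro y
    obtain ⟨q, hq⟩ := hgsur y
    exact ⟨QuotientAddGroup.mk (q, (0 : Q'.carrier)), hq⟩
  have hkerE' : πE'.ker = ιQ.range := by
    ext x
    constructor
    · intro hx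
      rw [AddMonoidHom.mem_ker] at hx
      induction x using QuotientAddGroup.induction_on with
      | H z =>
        rw [hπE'mk] at hx
        have : z.2 ∈ f'.range := by rw [← hg'ker]; exact hx
        obtain ⟨m, hm⟩ := this
        refine ⟨z.1 + f m, ?_⟩
        rw [hιQmk]
        show QuotientAddGroup.mk (z.1 + f m, (0 : Q'.carrier)) = QuotientAddGroup.mk z
        rw [QuotientAddGroup.eq]
        refine (hSmem _).2 ⟨-m, ?_⟩
        rw [map_neg, map_neg, neg_neg]
        show ((-f m, f' m) : Q.carrier × Q'.carrier) = _
        rw [hm]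
        show ((-f m, z.2) : Q.carrier × Q'.carrier) = (-(z.1 + f m) + z.1, -0 + z.2)
        rw [Prod.ext_iff]
        exact ⟨by show -f m = -(z.1 + f m) + z.1; abel, by show z.2 = -0 + z.2; simp⟩
    · rintro ⟨q, rfl⟩
      rw [AddMonoidHom.mem_ker, hιQmk, hπE'mk]
      exact map_zero g'
  have hkerE : πE.ker = ιQ'.range := by
    ext x
    constructor
    · intro hx
      rw [AddMonoidHom.mem_ker] at hx
      induction x using QuotientAddGroup.induction_on with
      | H z =>
        rw [hπEmk] at hx
        have : z.1 ∈ f.range := by rw [← hgker]; exact hx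
        obtain ⟨m, hm⟩ := this
        refine ⟨z.2 + f' m, ?_⟩
        rw [hιQ'mk]
        show QuotientAddGroup.mk ((0 : Q.carrier), z.2 + f' m) = QuotientAddGroup.mk z
        rw [QuotientAddGroup.eq]
        refine (hSmem _).2 ⟨m, ?_⟩
        show ((f m, -f' m) : Q.carrier × Q'.carrier) = (-0 + z.1, -(z.2 + f' m) + z.2)
        rw [hm]
        rw [Prod.ext_iff]
        exact ⟨by show z.1 = -0 + z.1; simp, by show -f' m = -(z.2 + f' m) + z.2; abel⟩
    · rintro ⟨q, rfl⟩
      rw [AddMonoidHom.mem_ker, hιQ'mk, hπEmk]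
      exact map_zero g
  -- apply the splitting lemma twice
  obtain ⟨e1, he1⟩ := splitting_lemma G Q.carrier Xq E'.carrier hQperm hE'flab
    ιQ πE' hιQe hπE'e hιQinj hπE'sur hkerE'
  obtain ⟨e2, he2⟩ := splitting_lemma G Q'.carrier Xq E.carrier hQ'perm hEflab
    ιQ' πE hιQ'e hπEe hιQ'inj hπEsur hkerE
  -- assemble: E × Q' ≃ Q' × E ≃ X ≃ Q × E' ≃ E' × Q
  refine ⟨Q', Q, hQ'perm, hQperm, ?_⟩
  have he2symm : ∀ (σ : G) (y : Q'.carrier × E.carrier), e2.symm (σ • y) = σ • e2.symm y := by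
    intro σ y
    apply e2.injective
    rw [AddEquiv.apply_symm_apply, he2, AddEquiv.apply_symm_apply]
  refine ⟨((AddEquiv.prodComm : E.carrier × Q'.carrier ≃+ Q'.carrier × E.carrier).trans
    (e2.symm.trans (e1.trans
      (AddEquiv.prodComm : Q.carrier × E'.carrier ≃+ E'.carrier × Q.carrier)))), ?_⟩
  intro σ x
  simp only [AddEquiv.trans_apply]
  rw [show ((AddEquiv.prodComm : E.carrier × Q'.carrier ≃+ Q'.carrier × E.carrier) (σ • x))
      = σ • (AddEquiv.prodComm x : Q'.carrier × E.carrier) from rfl]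
  rw [he2symm, he1]
  rfl
end

section
/- Let p be a prime and K a field of characteristic zero containing a primitive p-th root of unity ζ_p. Let σ act on K(y_0,…,y_{p-1}) by σ(y_i) = ζ_p^i y_i and σ fixing K. Then the fixed field K(y_0,…,y_{p-1})^{⟨σ⟩} equals K(y_0, z_1, …, z_{p-1}) where z_i = y_{t^i mod p}/(y_{t^{i-1} mod p})^t for 1 ≤ i ≤ p−2 and z_{p-1} = y_1^p, for any integer t generating (ℤ/pℤ)^×; in particular the fixed field is rational of transcendence degree p over K. -/
open MvPolynomial

section Helpers
variable (p : ℕ) (K : Type) [Field K]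
variable (F : Type) [Field F] [Algebra (MvPolynomial (Fin p) K) F]
    [IsFractionRing (MvPolynomial (Fin p) K) F] [Algebra K F]
    [IsScalarTower K (MvPolynomial (Fin p) K) F]

theorem aux_subfield_top (M : Subfield F) (hK : ∀ a : K, algebraMap K F a ∈ M)
    (hx : ∀ i : Fin p, algebraMap (MvPolynomial (Fin p) K) F (X i) ∈ M) (f : F) : f ∈ M := by
  have hR : ∀ r : MvPolynomial (Fin p) K, algebraMap _ F r ∈ M := by
    intro r
    induction r using MvPolynomial.induction_on with
    | C a =>
        rw [show (C a : MvPolynomial (Fin p) K) = algebraMap K _ a from rfl,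
          ← IsScalarTower.algebraMap_apply K (MvPolynomial (Fin p) K) F a]
        exact hK a
    | add q r hq hr => rw [map_add]; exact M.add_mem hq hr
    | mul_X q i hq => rw [map_mul]; exact M.mul_mem hq (hx i)
  obtain ⟨a, b, -, rfl⟩ := IsFractionRing.div_surjective (A := MvPolynomial (Fin p) K) f
  exact M.div_mem (hR a) (hR b)

theorem aux_mem_fixed (σ : F ≃ₐ[K] F) (f : F) (h : σ f = f) :
    f ∈ IntermediateField.fixedField (Subgroup.zpowers σ) := by
  rintro ⟨g, n, rfl⟩
  show (σ ^ n) • f = f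
  have key : ∀ m : ℕ, (σ ^ m) f = f := by
    intro m; induction m with
    | zero => rfl
    | succ k ih => rw [pow_succ', AlgEquiv.mul_apply, ih, h]
  induction n using Int.rec with
  | ofNat m => simpa using key m
  | negSucc m =>
      have := key (m+1)
      rw [zpow_negSucc]
      show ((σ ^ (m+1))⁻¹ : F ≃ₐ[K] F) f = f
      conv_lhs => rw [← this]
      exact (σ ^ (m+1)).symm_apply_apply f

theorem aux_ext (φ ψ : F ≃ₐ[K] F)
    (h : ∀ i : Fin p, φ (algebraMap (MvPolynomial (Fin p) K) F (X i)) =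
      ψ (algebraMap (MvPolynomial (Fin p) K) F (X i))) : φ = ψ := by
  have : ∀ f : F, (ψ⁻¹ * φ) f = f := by
    have := aux_subfield_top p K F
      (IntermediateField.fixedField (Subgroup.zpowers (ψ⁻¹ * φ))).toSubfield
      (fun a => (IntermediateField.fixedField (Subgroup.zpowers (ψ⁻¹ * φ))).algebraMap_mem a)
      (fun i => aux_mem_fixed K F _ _ (by
        show ψ⁻¹ (φ _) = _
        rw [h i]
        exact ψ.symm_apply_apply _))
    intro f
    exact this f ⟨ψ⁻¹ * φ, Subgroup.mem_zpowers _⟩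
  ext f
  have h3 : ψ⁻¹ (φ f) = f := this f
  have h4 := congrArg ψ h3
  rwa [show ψ (ψ⁻¹ (φ f)) = φ f from ψ.apply_symm_apply _] at h4

end Helpers

theorem aux_artin (K F : Type) [Field K] [Field F] [Algebra K F] (σ : F ≃ₐ[K] F)
    (n : ℕ) (hn : orderOf σ = n) (h0 : 0 < n) :
    Module.finrank (IntermediateField.fixedField (Subgroup.zpowers σ)) F = n := by
  have hfin : IsOfFinOrder σ := by
    rw [← orderOf_pos_iff, hn]; exact h0
  haveI : Finite (Subgroup.zpowers σ) := hfin.finite_zpowers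
  haveI : Fintype (Subgroup.zpowers σ) := Fintype.ofFinite _
  haveI : FaithfulSMul (Subgroup.zpowers σ) F :=
    ⟨fun {g1 g2} h => Subtype.ext (AlgEquiv.ext fun x => h x)⟩
  have := FixedPoints.finrank_eq_card (Subgroup.zpowers σ) F
  rw [← Nat.card_eq_fintype_card, Nat.card_zpowers, hn] at this
  exact this

theorem aux_surj (p : ℕ) (hp : p.Prime) (t : ℕ) (ht : orderOf ((t : ZMod p)) = p - 1)
    (i : ℕ) (hi : i < p) (hi0 : i ≠ 0) : ∃ j : ℕ, j ≤ p - 2 ∧ t ^ j % p = i := by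
  haveI : Fact p.Prime := ⟨hp⟩
  haveI : NeZero p := ⟨hp.ne_zero⟩
  have htu : IsUnit (t : ZMod p) := by
    apply IsUnit.of_pow_eq_one (n := p - 1)
    · rw [← ht]; exact pow_orderOf_eq_one _
    · have := hp.two_le; omega
  set u : (ZMod p)ˣ := htu.unit with hu
  have hou : orderOf u = p - 1 := by rw [← orderOf_units, IsUnit.unit_spec, ht]
  have hcard : Nat.card (ZMod p)ˣ = p - 1 := by
    simp [Nat.card_eq_fintype_card, ZMod.card_units_eq_totient, Nat.totient_prime hp]
  have htop : Subgroup.zpowers u = ⊤ := by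
    apply Subgroup.eq_top_of_card_eq
    rw [Nat.card_zpowers, hou, hcard]
  have hiu : IsUnit ((i : ZMod p)) := by
    apply isUnit_iff_ne_zero.mpr
    intro h
    rw [ZMod.natCast_eq_zero_iff] at h
    exact hi0 (Nat.eq_zero_of_dvd_of_lt h hi)
  have hmem : hiu.unit ∈ Subgroup.zpowers u := htop ▸ Subgroup.mem_top _
  obtain ⟨j, hj⟩ := mem_powers_iff_mem_zpowers.mpr hmem
  have hj' : u ^ (j % (p - 1)) = hiu.unit := by rw [← hj, ← hou, pow_mod_orderOf]
  have hple := hp.two_le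
  have hmlt : j % (p - 1) < p - 1 := Nat.mod_lt j (by omega)
  refine ⟨j % (p - 1), by omega, ?_⟩
  have : ((t : ZMod p)) ^ (j % (p-1)) = (i : ZMod p) := by
    have := congrArg (Units.val) hj'
    simpa [hu] using this
  have h2 : ((t ^ (j % (p-1)) : ℕ) : ZMod p) = ((i : ℕ) : ZMod p) := by push_cast; exact this
  rw [ZMod.natCast_eq_natCast_iff] at h2
  simpa [Nat.ModEq, Nat.mod_eq_of_lt hi] using h2

/-- let `p` be a prime and `K` a field of characteristic zero containing a
primitive `p`-th root of unity `ζ_p`.  Let `σ` act on the rational function field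
`F = K(y_0, …, y_{p-1})` by `σ(y_i) = ζ_p^i y_i`, fixing `K`.  Then the fixed field of
`⟨σ⟩` is `K(y_0, z_1, …, z_{p-1})`, where `z_i = y_{t^i mod p}/(y_{t^{i-1} mod p})^t` for
`1 ≤ i ≤ p - 2` and `z_{p-1} = y_1^p`, for any integer `t` generating `(ℤ/pℤ)ˣ`. -/
theorem stmt_14 (p : ℕ) (hp : p.Prime) [NeZero p] (K : Type) [Field K] [CharZero K]
    (ζ : K) (hζ : IsPrimitiveRoot ζ p)
    (F : Type) [Field F] [Algebra (MvPolynomial (Fin p) K) F]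
    [IsFractionRing (MvPolynomial (Fin p) K) F] [Algebra K F]
    [IsScalarTower K (MvPolynomial (Fin p) K) F]
    (σ : F ≃ₐ[K] F)
    (hσ : ∀ i : Fin p, σ (algebraMap (MvPolynomial (Fin p) K) F (MvPolynomial.X i)) =
      algebraMap K F (ζ ^ (i : ℕ)) * algebraMap (MvPolynomial (Fin p) K) F (MvPolynomial.X i))
    (t : ℕ) (ht : orderOf ((t : ZMod p)) = p - 1) :
    IntermediateField.fixedField (Subgroup.zpowers σ) =
      IntermediateField.adjoin K
        ({algebraMap (MvPolynomial (Fin p) K) F (MvPolynomial.X (0 : Fin p))} ∪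
         {w : F | ∃ i : ℕ, 1 ≤ i ∧ i ≤ p - 2 ∧
            w = algebraMap (MvPolynomial (Fin p) K) F
                  (MvPolynomial.X (⟨t ^ i % p, Nat.mod_lt _ hp.pos⟩ : Fin p)) /
                (algebraMap (MvPolynomial (Fin p) K) F
                  (MvPolynomial.X (⟨t ^ (i - 1) % p, Nat.mod_lt _ hp.pos⟩ : Fin p))) ^ t} ∪
         {(algebraMap (MvPolynomial (Fin p) K) F (MvPolynomial.X (1 : Fin p))) ^ p}) := by
  haveI : Fact p.Prime := ⟨hp⟩
  set R := MvPolynomial (Fin p) K with hR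
  set xv : Fin p → F := fun i => algebraMap R F (X i) with hxv
  -- basic facts
  have hxne : ∀ i : Fin p, xv i ≠ 0 := by
    intro i h
    exact MvPolynomial.X_ne_zero i
      ((map_eq_zero_iff _ (IsFractionRing.injective R F)).mp h)
  have hζ0 : ζ ≠ 0 := hζ.ne_zero hp.ne_zero
  have hv1 : ((1 : Fin p) : ℕ) = 1 := by
    rw [Fin.val_one']; exact Nat.mod_eq_of_lt hp.one_lt
  have hv0 : ((0 : Fin p) : ℕ) = 0 := rfl
  -- powers of σ on generators
  have hpow : ∀ (n : ℕ) (i : Fin p),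
      (σ ^ n) (xv i) = (algebraMap K F (ζ ^ (i : ℕ))) ^ n * xv i := by
    intro n i
    induction n with
    | zero => simp
    | succ k ih =>
        rw [pow_succ, AlgEquiv.mul_apply, hσ i, map_mul, AlgEquiv.commutes, ih]
        ring
  -- order of σ is p
  have hzmod : ∀ m : ℕ, ζ ^ m = ζ ^ (m % p) := by
    intro m
    conv_lhs => rw [← Nat.mod_add_div m p]
    rw [pow_add, pow_mul, hζ.pow_eq_one, one_pow, mul_one]
  have hone : σ ^ p = 1 := by
    apply aux_ext p K F
    intro i
    have hb : (algebraMap K F (ζ ^ ((i : Fin p) : ℕ))) ^ p = 1 := by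
      rw [← map_pow, ← pow_mul, mul_comm ((i : Fin p) : ℕ) p, pow_mul, hζ.pow_eq_one,
        one_pow, map_one]
    rw [hpow p i, hb, one_mul, AlgEquiv.one_apply]
  have hne1 : σ ≠ 1 := by
    intro h
    have h1 := hσ (1 : Fin p)
    rw [h, AlgEquiv.one_apply] at h1
    have h2 : algebraMap K F (ζ ^ ((1 : Fin p) : ℕ)) * xv 1 = 1 * xv 1 := by
      rw [one_mul, ← h1]
    have h3 := mul_right_cancel₀ (hxne 1) h2
    rw [hv1, pow_one] at h3
    exact hζ.ne_one hp.one_lt ((algebraMap K F).injective (by rwa [map_one]))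
  have horder : orderOf σ = p := orderOf_eq_prime hone hne1
  have hart := aux_artin K F σ p horder hp.pos
  -- the generating set
  set S : Set F :=
    ({algebraMap R F (X (0 : Fin p))} ∪
     {w : F | ∃ i : ℕ, 1 ≤ i ∧ i ≤ p - 2 ∧
        w = algebraMap R F (X (⟨t ^ i % p, Nat.mod_lt _ hp.pos⟩ : Fin p)) /
            (algebraMap R F (X (⟨t ^ (i - 1) % p, Nat.mod_lt _ hp.pos⟩ : Fin p))) ^ t} ∪
     {(algebraMap R F (X (1 : Fin p))) ^ p}) with hS
  set E : IntermediateField K F := IntermediateField.adjoin K S with hE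
  -- E ≤ fixed field
  have hle : E ≤ IntermediateField.fixedField (Subgroup.zpowers σ) := by
    rw [hE, IntermediateField.adjoin_le_iff]
    rintro f ((hf | hf) | hf)
    · rw [Set.mem_singleton_iff] at hf
      subst hf
      apply aux_mem_fixed
      rw [hσ 0, hv0, pow_zero, map_one, one_mul]
    · obtain ⟨i, hi1, hi2, rfl⟩ := hf
      apply aux_mem_fixed
      rw [map_div₀, map_pow, hσ, hσ]
      simp only [Fin.val_mk]
      have hkey : ζ ^ (t ^ i % p) = (ζ ^ (t ^ (i-1) % p)) ^ t := by
        have h5 : t ^ (i-1) * t = t ^ i := by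
          rw [← pow_succ]; congr 1; omega
        have hm1 : (t ^ (i-1) % p * t) % p = (t ^ (i-1) * t) % p :=
          (Nat.mod_modEq (t^(i-1)) p).mul_right t
        rw [← pow_mul, hzmod (t ^ i % p), hzmod (t ^ (i-1) % p * t),
          Nat.mod_mod_of_dvd _ dvd_rfl, hm1, h5]
      have hne : algebraMap K F (ζ ^ (t ^ i % p)) ≠ 0 := by
        rw [map_ne_zero_iff _ (algebraMap K F).injective]
        exact pow_ne_zero _ hζ0
      rw [mul_pow, ← map_pow, ← hkey, mul_div_mul_left _ _ hne]
    · rw [Set.mem_singleton_iff] at hf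
      subst hf
      apply aux_mem_fixed
      have hbase : (algebraMap K F (ζ ^ ((1 : Fin p) : ℕ))) ^ p = 1 := by
        rw [← map_pow, ← pow_mul, mul_comm ((1 : Fin p) : ℕ) p, pow_mul, hζ.pow_eq_one,
          one_pow, map_one]
      rw [map_pow, hσ, mul_pow, hbase, one_mul]
  -- x1 and its power
  set x1 : F := algebraMap R F (X (1 : Fin p)) with hx1
  have hx1p : x1 ^ p ∈ E := IntermediateField.subset_adjoin K S (Or.inr rfl)
  have hint : IsIntegral E x1 := by
    refine ⟨Polynomial.X ^ p - Polynomial.C (⟨x1 ^ p, hx1p⟩ : E),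
      Polynomial.monic_X_pow_sub_C _ hp.ne_zero, ?_⟩
    simp only [Polynomial.eval₂_sub, Polynomial.eval₂_pow, Polynomial.eval₂_X,
      Polynomial.eval₂_C]
    rw [show ((algebraMap E F) (⟨x1 ^ p, hx1p⟩ : E)) = x1 ^ p from rfl, sub_self]
  -- adjoin E x1 = everything
  have hEmem : ∀ f : F, f ∈ E → f ∈ IntermediateField.adjoin E {x1} := by
    intro f hf
    have : f = algebraMap E F ⟨f, hf⟩ := rfl
    rw [this]
    exact (IntermediateField.adjoin E {x1}).algebraMap_mem _
  have hclaim : ∀ j : ℕ, j ≤ p - 2 →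
      xv (⟨t ^ j % p, Nat.mod_lt _ hp.pos⟩ : Fin p) ∈ IntermediateField.adjoin E {x1} := by
    intro j
    induction j with
    | zero =>
        intro _
        have : (⟨t ^ 0 % p, Nat.mod_lt _ hp.pos⟩ : Fin p) = (1 : Fin p) := by
          apply Fin.ext
          simp only [pow_zero, Fin.val_mk, hv1]
          exact Nat.mod_eq_of_lt hp.one_lt
        rw [this]
        exact IntermediateField.subset_adjoin E {x1} rfl
    | succ k ih =>
        intro hk
        have hz : xv (⟨t ^ (k+1) % p, Nat.mod_lt _ hp.pos⟩ : Fin p) /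
            (xv (⟨t ^ k % p, Nat.mod_lt _ hp.pos⟩ : Fin p)) ^ t ∈ E := by
          apply IntermediateField.subset_adjoin K S
          left; right
          exact ⟨k + 1, by omega, hk, by simp [xv]⟩
        have hb := ih (by omega)
        have heq : xv (⟨t ^ (k+1) % p, Nat.mod_lt _ hp.pos⟩ : Fin p) =
            (xv (⟨t ^ (k+1) % p, Nat.mod_lt _ hp.pos⟩ : Fin p) /
              (xv (⟨t ^ k % p, Nat.mod_lt _ hp.pos⟩ : Fin p)) ^ t) *
            (xv (⟨t ^ k % p, Nat.mod_lt _ hp.pos⟩ : Fin p)) ^ t := by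
          rw [div_mul_cancel₀]
          exact pow_ne_zero _ (hxne _)
        rw [heq]
        exact mul_mem (hEmem _ hz) (pow_mem hb t)
  have hxmem : ∀ i : Fin p, xv i ∈ IntermediateField.adjoin E {x1} := by
    intro i
    by_cases hi : i = 0
    · subst hi
      exact hEmem _ (IntermediateField.subset_adjoin K S (Or.inl (Or.inl rfl)))
    · obtain ⟨j, hj1, hj2⟩ := aux_surj p hp t ht i.val i.isLt (fun h => hi (Fin.ext h))
      have : (⟨t ^ j % p, Nat.mod_lt _ hp.pos⟩ : Fin p) = i := Fin.ext hj2
      rw [← this]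
      exact hclaim j hj1
  have htop2 : IntermediateField.adjoin E {x1} = ⊤ := by
    rw [eq_top_iff]
    rintro f -
    exact aux_subfield_top p K F (IntermediateField.adjoin E {x1}).toSubfield
      (fun a => by
        rw [IsScalarTower.algebraMap_apply K E F a]
        exact (IntermediateField.adjoin E {x1}).algebraMap_mem _)
      hxmem f
  -- finite dimensionality and rank bound
  haveI hfd1 : FiniteDimensional E (IntermediateField.adjoin E {x1}) := by
    have := IntermediateField.adjoin.finiteDimensional hint
    convert this using 2
  haveI hfd : FiniteDimensional E F := by
    rw [htop2] at hfd1
    exact LinearEquiv.finiteDimensional (IntermediateField.topEquiv.toLinearEquiv)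
  have hrank : Module.finrank E F ≤ p := by
    have h6 : Module.finrank E F = (minpoly E x1).natDegree := by
      rw [← IntermediateField.finrank_top', ← htop2]
      exact IntermediateField.adjoin.finrank hint
    rw [h6]
    have h7 := Polynomial.natDegree_le_natDegree (minpoly.min E x1
      (Polynomial.monic_X_pow_sub_C (⟨x1 ^ p, hx1p⟩ : E) hp.ne_zero)
      (by
        simp only [map_sub, map_pow, Polynomial.aeval_X, Polynomial.aeval_C]
        rw [show ((algebraMap E F) (⟨x1 ^ p, hx1p⟩ : E)) = x1 ^ p from rfl, sub_self]))
    rwa [Polynomial.natDegree_X_pow_sub_C] at h7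
  exact (IntermediateField.eq_of_le_of_finrank_le' hle (by rw [hart]; exact hrank)).symm
end
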